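/- Let S be a commutative Noetherian ring, M an S-module, and x ∈ S a non-zerodivisor on both S and M. If M → I is a minimal injective resolution of M, then the canonical induced map M/xM → Σ^1 Hom_S(S/xS, I) is a minimal injective resolution of the S/xS-module M/xM. -/

import Mathlib

open CategoryTheory CategoryTheory.Limits

universe u

variable (R : Type u) [CommRing R]

/-- The `a`-torsion submodule `Γ_a(M) = {x ∈ M | aⁿ x = 0 for some n}`. -/
def aTorsion (a : Ideal R) (M : Type u) [AddCommGroup M] [Module R M] : Submodule R M where
  carrier := {x | ∃ n : ℕ, ∀ r ∈ a ^ n, r • x = 0}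
  zero_mem' := ⟨0, fun r _ => smul_zero r⟩
  add_mem' := by
    intro x y hx hy
    obtain ⟨n, hn⟩ := hx
    obtain ⟨m, hm⟩ := hy
    exact ⟨n + m, fun r hr => by
      rw [smul_add, hn r (Ideal.pow_le_pow_right (Nat.le_add_right n m) hr),
        hm r (Ideal.pow_le_pow_right (Nat.le_add_left m n) hr), add_zero]⟩
  smul_mem' := by
    intro c x hx
    obtain ⟨n, hn⟩ := hx
    exact ⟨n, fun r hr => by rw [smul_comm, hn r hr, smul_zero]⟩

/-- Functoriality of the `a`-torsion submodule. -/
def aTorsionMap (a : Ideal R) {M N : Type u} [AddCommGroup M] [Module R M]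
    [AddCommGroup N] [Module R N] (f : M →ₗ[R] N) :
    aTorsion R a M →ₗ[R] aTorsion R a N :=
  f.restrict (p := aTorsion R a M) (q := aTorsion R a N) (fun x hx => by
    obtain ⟨n, hn⟩ := hx
    exact ⟨n, fun r hr => by rw [← map_smul, hn r hr, map_zero]⟩)

/-- The `a`-torsion functor `Γ_a : Mod R → Mod R`. -/
def torsionFunctor (a : Ideal R) : ModuleCat.{u} R ⥤ ModuleCat.{u} R where
  obj M := ModuleCat.of R (aTorsion R a M)
  map f := ModuleCat.ofHom (aTorsionMap R a f.hom)
  map_id := by intros; ext; rfl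
  map_comp := by intros; ext; rfl

instance (a : Ideal R) : (torsionFunctor R a).Additive where
  map_add := by intros; ext x; rfl

/-- The `a`-torsion functor applied degreewise to a cochain complex. -/
def torsionCpx (a : Ideal R) (U : CochainComplex (ModuleCat.{u} R) ℤ) :
    CochainComplex (ModuleCat.{u} R) ℤ :=
  ((torsionFunctor R a).mapHomologicalComplex (ComplexShape.up ℤ)).obj U


/-- A totally acyclic complex of injective modules. -/
structure IsTotallyAcyclicInjCpx (U : CochainComplex (ModuleCat.{u} R) ℤ) : Prop where
  inj : ∀ i : ℤ, Injective (U.X i)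
  acyclic : ∀ i : ℤ, U.ExactAt i
  hom_acyclic : ∀ (J : ModuleCat.{u} R), Injective J → ∀ (i : ℤ) (g : J ⟶ U.X i),
    g ≫ U.d i (i + 1) = 0 → ∃ h : J ⟶ U.X (i - 1), h ≫ U.d (i - 1) i = g

/-- `ι : M ⟶ I.X 0` is an injective resolution of `M` (with `I` a ℤ-indexed cochain
complex vanishing in negative degrees). -/
structure IsInjRes (M : ModuleCat.{u} R) (I : CochainComplex (ModuleCat.{u} R) ℤ)
    (ι : M ⟶ I.X 0) : Prop where
  inj : ∀ i : ℤ, Injective (I.X i)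
  zero_neg : ∀ i < (0 : ℤ), IsZero (I.X i)
  mono : Function.Injective ι
  exact_zero : LinearMap.range ι.hom = LinearMap.ker (I.d 0 1).hom
  exact_pos : ∀ i > (0 : ℤ), I.ExactAt i

/-- A complete injective resolution of `M`. -/
structure IsCompleteInjRes (M : ModuleCat.{u} R) (I U : CochainComplex (ModuleCat.{u} R) ℤ)
    (ι : M ⟶ I.X 0) (ν : I ⟶ U) : Prop where
  res : IsInjRes R M I ι
  totAcyclic : IsTotallyAcyclicInjCpx R U
  iso_ge : ∃ n : ℤ, ∀ i ≥ n, IsIso (ν.f i)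

/-- A complex is minimal if every self homotopy equivalence is an isomorphism. -/
def IsMinimalCpx (C : CochainComplex (ModuleCat.{u} R) ℤ) : Prop :=
  ∀ e : HomotopyEquiv C C, IsIso e.hom

/-- The data of a minimal complete injective resolution of `M`. -/
structure MinCIR (M : ModuleCat.{u} R) where
  I : CochainComplex (ModuleCat.{u} R) ℤ
  U : CochainComplex (ModuleCat.{u} R) ℤ
  ι : M ⟶ I.X 0
  ν : I ⟶ U
  complete : IsCompleteInjRes R M I U ι ν
  minI : IsMinimalCpx R I
  minU : IsMinimalCpx R U

/-- The stable local cohomology module `Γ^stab_a(M) = Z⁰(Γ_a(U))` computed from a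
totally acyclic complex `U` (the complete injective resolution of `M`). -/
def stabLC (a : Ideal R) (U : CochainComplex (ModuleCat.{u} R) ℤ) : ModuleCat.{u} R :=
  ModuleCat.of R (LinearMap.ker ((torsionCpx R a U).d 0 1).hom)

/-- A Gorenstein injective module: a cycle of a totally acyclic complex of injectives. -/
def GorensteinInjective (G : ModuleCat.{u} R) : Prop :=
  ∃ U : CochainComplex (ModuleCat.{u} R) ℤ, IsTotallyAcyclicInjCpx R U ∧
    Nonempty (G ≃ₗ[R] LinearMap.ker (U.d 0 1).hom)

/-- Isomorphism in the stable category of Gorenstein injective modules: `X ⊕ J₁ ≅ Y ⊕ J₂`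
for some injective modules `J₁`, `J₂`. -/
def StablyIsomorphic (X Y : ModuleCat.{u} R) : Prop :=
  ∃ J₁ J₂ : ModuleCat.{u} R, Injective J₁ ∧ Injective J₂ ∧
    Nonempty ((X × J₁) ≃ₗ[R] (Y × J₂))

/-- `M` has injective dimension at most `n`. -/
def InjDimLE (M : ModuleCat.{u} R) (n : ℕ) : Prop :=
  ∃ (I : CochainComplex (ModuleCat.{u} R) ℤ) (ι : M ⟶ I.X 0),
    IsInjRes R M I ι ∧ ∀ i : ℤ, i > (n : ℤ) → IsZero (I.X i)

/-- `M` has finite injective dimension. -/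
def FiniteInjDim (M : ModuleCat.{u} R) : Prop := ∃ n : ℕ, InjDimLE R M n

/-- A Gorenstein ring: commutative Noetherian and every localization at a prime has finite
self-injective dimension. -/
def IsGorensteinRing : Prop :=
  IsNoetherianRing R ∧ ∀ (p : Ideal R) (hp : p.IsPrime),
    haveI := hp
    FiniteInjDim (Localization.AtPrime p)
      (ModuleCat.of (Localization.AtPrime p) (Localization.AtPrime p))

section Stmt14

variable (S : Type u) [CommRing S]

/-- A submodule is essential if it meets every nonzero submodule. -/
def IsEssentialSub {N : Type u} [AddCommGroup N] [Module S N] (Z : Submodule S N) : Prop :=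
  ∀ W : Submodule S N, W ≠ ⊥ → W ⊓ Z ≠ ⊥

/-- A minimal injective resolution: an injective resolution in which each term is an
injective hull of its cycles. -/
structure IsMinInjRes (M : ModuleCat.{u} S) (I : CochainComplex (ModuleCat.{u} S) ℤ)
    (ι : M ⟶ I.X 0) : Prop where
  res : IsInjRes S M I ι
  ess : ∀ i : ℤ, 0 ≤ i →
    IsEssentialSub S (LinearMap.ker (I.d i (i + 1)).hom : Submodule S (I.X i))

/-- `N` (an `S`-module killed by `x`) is injective as an `S/(x)`-module. -/
def QuotInjModule (x : S) (N : Type u) [AddCommGroup N] [Module S N]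
    (hN : Module.IsTorsionBy S N x) : Prop :=
  letI : Module (S ⧸ Ideal.span {x}) N :=
    ((Module.isTorsionBySet_iff_is_torsion_by_span ({x} : Set S)).mp
      ((Module.isTorsionBySet_singleton_iff x).mpr hN)).module
  Module.Injective (S ⧸ Ideal.span {x}) N

/-- The degree-`i` term of `Σ¹ Hom_S(S/xS, I)`, realized as the `x`-torsion elements of
`I^{i+1}`. -/
noncomputable def xTorsCpxX (x : S) (I : CochainComplex (ModuleCat.{u} S) ℤ) (i : ℤ) :
    Submodule S (I.X (i + 1)) :=
  Submodule.torsionBy S (I.X (i + 1)) x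

/-- The differential of `Σ¹ Hom_S(S/xS, I)` (restriction of the differential of `I`). -/
noncomputable def xTorsCpxD (x : S) (I : CochainComplex (ModuleCat.{u} S) ℤ) (i : ℤ) :
    (xTorsCpxX S x I i) →ₗ[S] (xTorsCpxX S x I (i + 1)) :=
  ((I.d (i + 1) (i + 1 + 1)).hom : I.X (i + 1) →ₗ[S] I.X (i + 1 + 1)).restrict
    (p := xTorsCpxX S x I i) (q := xTorsCpxX S x I (i + 1)) (fun u hu => by
      have hu' : x • u = 0 := (Submodule.mem_torsionBy_iff x u).mp hu
      refine (Submodule.mem_torsionBy_iff x _).mpr ?_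
      rw [← map_smul, hu', map_zero])

end Stmt14

private lemma inj_module_of {S : Type u} [CommRing S] (Q : ModuleCat.{u} S)
    (h : CategoryTheory.Injective Q) : Module.Injective S Q :=
  haveI : CategoryTheory.Injective (ModuleCat.of S Q) := h
  Module.injective_module_of_injective_object S Q

private lemma div_nzd {S : Type u} [CommRing S] {x : S} (hx : x ∈ nonZeroDivisors S)
    (Q : ModuleCat.{u} S) (h : CategoryTheory.Injective Q) (t : Q) :
    ∃ s : Q, x • s = t := by
  have hQ := inj_module_of Q h
  have hinj : Function.Injective (LinearMap.lsmul S S x) := by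
    intro a b hab
    have : x * a = x * b := hab
    exact (mul_cancel_left_mem_nonZeroDivisors hx).mp this
  obtain ⟨g, hg⟩ := hQ.out (LinearMap.lsmul S S x) hinj (LinearMap.toSpanSingleton S Q t)
  refine ⟨g 1, ?_⟩
  have h1 := hg 1
  simp only [LinearMap.lsmul_apply, smul_eq_mul, mul_one, LinearMap.toSpanSingleton_apply,
    one_smul] at h1
  rw [← h1, ← map_smul, smul_eq_mul, mul_one]

private lemma exact_step {S : Type u} [CommRing S] (I : CochainComplex (ModuleCat.{u} S) ℤ)
    {a b c : ℤ} (hab : a + 1 = b) (hbc : b + 1 = c) (h : I.ExactAt b)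
    (v : I.X b) (hv : I.d b c v = 0) : ∃ u : I.X a, I.d a b u = v := by
  rw [I.exactAt_iff' a b c
    ((ComplexShape.up ℤ).prev_eq' (by simpa using hab))
    ((ComplexShape.up ℤ).next_eq' (by simpa using hbc))] at h
  rw [ShortComplex.moduleCat_exact_iff] at h
  exact h v hv

private lemma d_d_zero {S : Type u} [CommRing S] (I : CochainComplex (ModuleCat.{u} S) ℤ)
    (a b c : ℤ) (u : I.X a) : I.d b c (I.d a b u) = 0 := by
  have h : (I.d a b ≫ I.d b c) u = (0 : I.X a ⟶ I.X c) u := by rw [I.d_comp_d a b c]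
  have h2 : I.d b c (I.d a b u) = (0 : I.X a ⟶ I.X c) u := h
  rw [h2]; rfl


/-- If `x` is a non-zerodivisor on the commutative Noetherian ring `S`
and on the `S`-module `M`, and `M → I` is a minimal injective resolution, then the
canonical induced map `M/xM → Σ¹Hom_S(S/xS, I)` is a minimal injective resolution of
`M/xM` over `S/xS`.  Here `Hom_S(S/xS, I^i)` is realized as the submodule of `x`-torsion
elements of `I^i`, and the canonical map `θ` is characterized by
`θ(m mod xM) = ∂(u)` whenever `x•u = ι(m)`. -/
theorem min_inj_res_mod_element (S : Type u) [CommRing S] [IsNoetherianRing S]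
    (M : Type u) [AddCommGroup M] [Module S M]
    (x : S) (hxS : x ∈ nonZeroDivisors S) (hxM : ∀ m : M, x • m = 0 → m = 0)
    (I : CochainComplex (ModuleCat.{u} S) ℤ) (ι : ModuleCat.of S M ⟶ I.X 0)
    (hI : IsMinInjRes S (ModuleCat.of S M) I ι)
    (θ : (M ⧸ (Ideal.span {x} • (⊤ : Submodule S M))) →ₗ[S] xTorsCpxX S x I 0)
    (hθ : ∀ (m : M) (u : I.X 0), x • u = ι m →
      ((θ (Submodule.Quotient.mk m) : I.X (0 + 1)) = I.d 0 1 u)) :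
    -- `θ` is injective
    Function.Injective θ ∧
    -- exactness at degree 0
    LinearMap.range θ = LinearMap.ker (xTorsCpxD S x I 0) ∧
    -- exactness in positive degrees
    (∀ i : ℤ, 0 ≤ i →
      LinearMap.range (xTorsCpxD S x I i) = LinearMap.ker (xTorsCpxD S x I (i + 1))) ∧
    -- each term is an injective `S/(x)`-module
    (∀ i : ℤ, 0 ≤ i →
      QuotInjModule S x (xTorsCpxX S x I i)
        (Submodule.torsionBy_isTorsionBy (R := S) (M := I.X (i + 1)) (a := x))) ∧
    -- minimality: each term is an injective hull of its cycles
    (∀ i : ℤ, 0 ≤ i →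
      IsEssentialSub S (LinearMap.ker (xTorsCpxD S x I i) : Submodule S (xTorsCpxX S x I i))) := by
  have div0 : ∀ m : M, ∃ u : I.X 0, x • u = ι m := fun m => div_nzd hxS (I.X 0) (hI.res.inj 0) (ι m)
  refine ⟨?_, ?_, ?_, ?_, ?_⟩
  · -- injectivity of θ
    rw [← LinearMap.ker_eq_bot, eq_bot_iff]
    intro a ha
    obtain ⟨m, rfl⟩ := Submodule.Quotient.mk_surjective _ a
    obtain ⟨u, hu⟩ := div0 m
    have h0 : ((θ (Submodule.Quotient.mk m) : I.X (0 + 1))) = 0 := by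
      rw [LinearMap.mem_ker.mp ha]; rfl
    have hdu : u ∈ LinearMap.ker (I.d 0 1).hom := by
      have : I.d 0 1 u = 0 := by rw [← hθ m u hu]; exact h0
      exact this
    rw [← hI.res.exact_zero] at hdu
    obtain ⟨m', hm'⟩ := hdu
    have : ι (x • m') = ι m := by rw [map_smul, hm', hu]
    have hm : x • m' = m := hI.res.mono this
    rw [Submodule.mem_bot, Submodule.Quotient.mk_eq_zero]
    exact hm ▸ Submodule.smul_mem_smul (Ideal.mem_span_singleton_self x) trivial
  · -- exactness at degree 0
    ext v
    simp only [LinearMap.mem_range, LinearMap.mem_ker]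
    constructor
    · rintro ⟨a, rfl⟩
      obtain ⟨m, rfl⟩ := Submodule.Quotient.mk_surjective _ a
      obtain ⟨u, hu⟩ := div0 m
      refine Subtype.ext ?_
      show I.d (0+1) (0+1+1) ((θ (Submodule.Quotient.mk m) : I.X (0 + 1))) = 0
      rw [hθ m u hu]
      exact d_d_zero I 0 (0+1) (0+1+1) u
    · intro hv
      have hv' : I.d (0+1) (0+1+1) (v : I.X (0+1)) = 0 := congrArg Subtype.val hv
      obtain ⟨u, hu⟩ := exact_step I rfl rfl (hI.res.exact_pos (0+1) (by norm_num)) (v : I.X (0+1)) hv'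
      have hxu : x • u ∈ LinearMap.ker (I.d 0 (0+1)).hom := by
        show I.d 0 (0+1) (x • u) = 0
        rw [map_smul, hu]
        exact (Submodule.mem_torsionBy_iff x _).mp v.2
      rw [show ((0:ℤ)+1) = 1 from rfl, ← hI.res.exact_zero] at hxu
      obtain ⟨m, hm⟩ := hxu
      refine ⟨Submodule.Quotient.mk m, Subtype.ext ?_⟩
      show (θ (Submodule.Quotient.mk m) : I.X (0 + 1)) = (v : I.X (0+1))
      rw [hθ m u hm.symm]
      exact hu
  · -- exactness in positive degrees
    intro i hi
    ext v
    simp only [LinearMap.mem_range, LinearMap.mem_ker]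
    constructor
    · rintro ⟨w, rfl⟩
      refine Subtype.ext ?_
      show I.d (i+1+1) (i+1+1+1) (I.d (i+1) (i+1+1) (w : I.X (i+1))) = 0
      exact d_d_zero I (i+1) (i+1+1) (i+1+1+1) (w : I.X (i+1))
    · intro hv
      have hv' : I.d (i+1+1) (i+1+1+1) (v : I.X (i+1+1)) = 0 := congrArg Subtype.val hv
      -- v.val = d u for some u : I.X (i+1)
      obtain ⟨u, hu⟩ := exact_step I rfl rfl (hI.res.exact_pos (i+1+1) (by omega))
        (v : I.X (i+1+1)) hv'
      -- x • u is a cycle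
      have hxu : I.d (i+1) (i+1+1) (x • u) = 0 := by
        rw [map_smul, hu]
        exact (Submodule.mem_torsionBy_iff x _).mp v.2
      -- x • u = d t for some t : I.X i
      obtain ⟨t, ht⟩ := exact_step I rfl rfl (hI.res.exact_pos (i+1) (by omega)) (x • u) hxu
      -- t = x • s by divisibility of I.X i
      obtain ⟨s, hs⟩ := div_nzd hxS (I.X i) (hI.res.inj i) t
      -- w := u - d s is x-torsion and maps to v
      have hw : x • (u - I.d i (i+1) s) = 0 := by
        rw [smul_sub, ← map_smul, hs, ht, sub_self]
      refine ⟨⟨u - I.d i (i+1) s, (Submodule.mem_torsionBy_iff x _).mpr hw⟩, Subtype.ext ?_⟩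
      show I.d (i+1) (i+1+1) (u - I.d i (i+1) s) = (v : I.X (i+1+1))
      rw [map_sub, hu, d_d_zero I i (i+1) (i+1+1) s, sub_zero]
  · -- injectivity over S/(x)
    intro i hi
    show QuotInjModule S x (xTorsCpxX S x I i) _
    unfold QuotInjModule
    letI : Module (S ⧸ Ideal.span {x}) (xTorsCpxX S x I i) :=
      ((Module.isTorsionBySet_iff_is_torsion_by_span ({x} : Set S)).mp
        ((Module.isTorsionBySet_singleton_iff x).mpr
          (Submodule.torsionBy_isTorsionBy (R := S) (M := I.X (i + 1)) (a := x)))).module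
    have mk_smul : ∀ (s : S) (n : xTorsCpxX S x I i),
        (Ideal.Quotient.mk (Ideal.span {x}) s) • n = s • n := fun s n => rfl
    refine Module.Baer.injective ?_
    intro J f
    -- pull back to an ideal of S
    set Jc : Ideal S := J.comap (Ideal.Quotient.mk (Ideal.span {x}))
    have hmem : ∀ j : S, j ∈ Jc → Ideal.Quotient.mk (Ideal.span {x}) j ∈ J := fun j hj => hj
    -- the induced S-linear map from Jc to I.X (i+1)
    let fS : Jc →ₗ[S] I.X (i+1) :=
      { toFun := fun j => (f ⟨Ideal.Quotient.mk _ j.1, hmem j.1 j.2⟩ : I.X (i+1))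
        map_add' := by
          intro a b
          rw [← Submodule.coe_add, ← map_add]
          congr 1
        map_smul' := by
          intro s a
          have : (⟨Ideal.Quotient.mk (Ideal.span {x}) (s • a.1), hmem _ (Jc.smul_mem s a.2)⟩ : J)
              = (Ideal.Quotient.mk (Ideal.span {x}) s) • ⟨Ideal.Quotient.mk _ a.1, hmem a.1 a.2⟩ := by
            apply Subtype.ext
            show Ideal.Quotient.mk (Ideal.span {x}) (s • a.1) = _
            rw [smul_eq_mul, map_mul]
            rfl
          show ((f ⟨Ideal.Quotient.mk _ (s • a.1), _⟩ : xTorsCpxX S x I i) : I.X (i+1)) = s • _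
          rw [this, map_smul, mk_smul]
          rfl }
    -- extend fS along Jc ↪ S using injectivity of I.X (i+1)
    have hQ := inj_module_of (I.X (i+1)) (hI.res.inj (i+1))
    obtain ⟨g, hg⟩ := hQ.out (Jc.subtype) (Subtype.val_injective) fS
    -- q := g 1 is x-torsion
    have hxJ : x ∈ Jc := by
      show Ideal.Quotient.mk (Ideal.span {x}) x ∈ J
      rw [Ideal.Quotient.eq_zero_iff_mem.mpr (Ideal.mem_span_singleton_self x)]
      exact J.zero_mem
    have hq : x • g 1 = 0 := by
      have h1 : g x = fS ⟨x, hxJ⟩ := hg ⟨x, hxJ⟩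
      have h2 : (⟨Ideal.Quotient.mk (Ideal.span {x}) x, hmem x hxJ⟩ : J) = 0 := by
        apply Subtype.ext
        exact Ideal.Quotient.eq_zero_iff_mem.mpr (Ideal.mem_span_singleton_self x)
      have h3 : fS ⟨x, hxJ⟩ = 0 := by
        show ((f ⟨Ideal.Quotient.mk _ x, _⟩ : xTorsCpxX S x I i) : I.X (i+1)) = 0
        rw [h2, map_zero]
        rfl
      calc x • g 1 = g (x • 1) := (map_smul g x 1).symm
        _ = g x := by rw [smul_eq_mul, mul_one]
        _ = 0 := by rw [h1, h3]
    set qn : xTorsCpxX S x I i := ⟨g 1, (Submodule.mem_torsionBy_iff x _).mpr hq⟩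
    refine ⟨LinearMap.toSpanSingleton _ _ qn, ?_⟩
    intro z hz
    obtain ⟨s, rfl⟩ := Ideal.Quotient.mk_surjective z
    have hsJ : s ∈ Jc := hz
    apply Subtype.ext
    show ((Ideal.Quotient.mk (Ideal.span {x}) s • qn : xTorsCpxX S x I i) : I.X (i+1)) = _
    rw [mk_smul]
    show s • g 1 = ((f ⟨Ideal.Quotient.mk _ s, hz⟩ : xTorsCpxX S x I i) : I.X (i+1))
    calc s • g 1 = g (s • 1) := (map_smul g s 1).symm
      _ = g s := by rw [smul_eq_mul, mul_one]
      _ = fS ⟨s, hsJ⟩ := hg ⟨s, hsJ⟩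
      _ = _ := rfl
  · -- essentiality
    intro i hi
    intro W hW
    -- map W into I.X (i+1)
    have hW' : W.map (xTorsCpxX S x I i).subtype ≠ ⊥ := by
      intro hbot
      apply hW
      rw [eq_bot_iff]
      intro w hw
      have : (w : I.X (i+1)) ∈ W.map (xTorsCpxX S x I i).subtype :=
        ⟨w, hw, rfl⟩
      rw [hbot, Submodule.mem_bot] at this
      rw [Submodule.mem_bot]
      exact Subtype.ext this
    have hess := hI.ess (i+1) (by omega) (W.map (xTorsCpxX S x I i).subtype) hW'
    rw [Submodule.ne_bot_iff] at hess
    obtain ⟨y, ⟨hyW, hyK⟩, hy0⟩ := hess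
    obtain ⟨w, hwW, rfl⟩ := hyW
    rw [Submodule.ne_bot_iff]
    refine ⟨w, ⟨hwW, ?_⟩, ?_⟩
    · show w ∈ LinearMap.ker (xTorsCpxD S x I i)
      rw [LinearMap.mem_ker]
      apply Subtype.ext
      exact hyK
    · intro h0
      exact hy0 (by rw [h0]; rfl)
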